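/- Every triangle-free finite simple graph on n vertices admits a proper coloring with at most 3⌈√n⌉ colors in which every color class contains at most 2⌈√n⌉ vertices. -/

import Mathlib

open SimpleGraph

private lemma tfb_div_add_div_le (a b c : ℕ) (hc : 0 < c) : a / c + b / c ≤ (a + b) / c := by
  rw [Nat.le_div_iff_mul_le hc, Nat.add_mul]
  exact Nat.add_le_add (Nat.div_mul_le_self _ _) (Nat.div_mul_le_self _ _)

/-- Splitting one finset into chunks of size at most `2*s`. -/
private lemma tfb_split {V : Type*} [DecidableEq V] (s : ℕ) (hs : 1 ≤ s) :
    ∀ m (I : Finset V), I.card ≤ m → ∃ L : List (Finset V),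
      (∀ v ∈ I, ∃ J ∈ L, v ∈ J) ∧ (∀ J ∈ L, J ⊆ I ∧ J.card ≤ 2 * s) ∧
      L.length ≤ I.card / (2 * s) + 1 := by
  intro m
  induction m with
  | zero =>
    intro I hI
    refine ⟨[I], fun v hv => ⟨I, by simp, hv⟩, ?_, by simp⟩
    intro J hJ
    simp only [List.mem_singleton] at hJ
    subst hJ
    exact ⟨subset_rfl, by omega⟩
  | succ m ih =>
    intro I hI
    by_cases hle : I.card ≤ 2 * s
    · refine ⟨[I], fun v hv => ⟨I, by simp, hv⟩, ?_, by simp⟩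
      intro J hJ
      simp only [List.mem_singleton] at hJ
      subst hJ
      exact ⟨subset_rfl, hle⟩
    · push_neg at hle
      obtain ⟨J, hJI, hJcard⟩ := Finset.exists_subset_card_eq hle.le
      have hsd : (I \ J).card = I.card - 2 * s := by
        rw [Finset.card_sdiff_of_subset hJI, hJcard]
      obtain ⟨L, hcov, hsub, hlen⟩ := ih (I \ J) (by omega)
      refine ⟨J :: L, ?_, ?_, ?_⟩
      · intro v hv
        by_cases hvJ : v ∈ J
        · exact ⟨J, by simp, hvJ⟩
        · obtain ⟨K, hK, hvK⟩ := hcov v (Finset.mem_sdiff.mpr ⟨hv, hvJ⟩)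
          exact ⟨K, by simp [hK], hvK⟩
      · intro K hK
        rcases List.mem_cons.mp hK with rfl | hK
        · exact ⟨hJI, by omega⟩
        · exact ⟨(hsub K hK).1.trans Finset.sdiff_subset, (hsub K hK).2⟩
      · simp only [List.length_cons]
        rw [hsd] at hlen
        have hkey : (I.card - 2 * s) / (2 * s) + 1 = I.card / (2 * s) := by
          obtain ⟨t, ht⟩ : ∃ t, I.card = 2 * s + t := ⟨I.card - 2 * s, by omega⟩
          rw [ht, Nat.add_sub_cancel_left, Nat.add_comm (2 * s) t,
            Nat.add_div_right _ (by omega)]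
        omega

/-- Splitting every finset in a list into chunks of size at most `2*s`. -/
private lemma tfb_splitAll {V : Type*} [DecidableEq V] (s : ℕ) (hs : 1 ≤ s) :
    ∀ L : List (Finset V), ∃ L₂ : List (Finset V),
      (∀ I ∈ L, ∀ v ∈ I, ∃ J ∈ L₂, v ∈ J) ∧
      (∀ J ∈ L₂, (∃ I ∈ L, J ⊆ I) ∧ J.card ≤ 2 * s) ∧
      L₂.length ≤ L.length + (L.map Finset.card).sum / (2 * s) := by
  intro L
  induction L with
  | nil => exact ⟨[], by simp, by simp, by simp⟩
  | cons I L ih =>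
    obtain ⟨L₂, hcov, hsub, hlen⟩ := ih
    obtain ⟨S, hScov, hSsub, hSlen⟩ := tfb_split s hs I.card I le_rfl
    refine ⟨S ++ L₂, ?_, ?_, ?_⟩
    · intro K hK v hv
      rcases List.mem_cons.mp hK with rfl | hK
      · obtain ⟨J, hJ, hvJ⟩ := hScov v hv
        exact ⟨J, List.mem_append.mpr (Or.inl hJ), hvJ⟩
      · obtain ⟨J, hJ, hvJ⟩ := hcov K hK v hv
        exact ⟨J, List.mem_append.mpr (Or.inr hJ), hvJ⟩
    · intro J hJ
      rcases List.mem_append.mp hJ with hJ | hJ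
      · exact ⟨⟨I, by simp, (hSsub J hJ).1⟩, (hSsub J hJ).2⟩
      · obtain ⟨⟨K, hK, hJK⟩, hc⟩ := hsub J hJ
        exact ⟨⟨K, by simp [hK], hJK⟩, hc⟩
    · have hdd := tfb_div_add_div_le I.card (L.map Finset.card).sum (2 * s) (by omega)
      simp only [List.length_append, List.length_cons, List.map_cons, List.sum_cons]
      omega

/-- Phase 2: a graph where every vertex has at most `d` neighbours inside `B`
can be covered by `d+1` independent sets (iterated maximal independent sets). -/
private lemma tfb_ph2 {V : Type*} [DecidableEq V] {G : SimpleGraph V} [DecidableRel G.Adj] :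
    ∀ d (B : Finset V), (∀ v ∈ B, (B.filter (G.Adj v)).card ≤ d) →
    ∃ L : List (Finset V),
      (∀ v ∈ B, ∃ I ∈ L, v ∈ I) ∧
      (∀ I ∈ L, I ⊆ B ∧ ∀ u ∈ I, ∀ w ∈ I, ¬ G.Adj u w) ∧
      L.length ≤ d + 1 ∧ (L.map Finset.card).sum ≤ B.card := by
  intro d
  induction d with
  | zero =>
    intro B hB
    refine ⟨[B], fun v hv => ⟨B, by simp, hv⟩, ?_, by simp, by simp⟩
    intro I hI
    simp only [List.mem_singleton] at hI
    subst hI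
    refine ⟨subset_rfl, fun u hu w hw hadj => ?_⟩
    have hw' : w ∈ I.filter (G.Adj u) := Finset.mem_filter.mpr ⟨hw, hadj⟩
    have := hB u hu
    have := Finset.card_pos.mpr ⟨w, hw'⟩
    omega
  | succ d ih =>
    intro B hB
    -- pick a maximal independent subset of B
    set F : Finset (Finset V) :=
      Finset.filter (fun I => ∀ u ∈ I, ∀ w ∈ I, ¬ G.Adj u w) B.powerset with hF
    have hne : F.Nonempty := ⟨∅, by simp [hF]⟩
    obtain ⟨M, hMF, hMmax⟩ := F.exists_maximal hne
    rw [hF, Finset.mem_filter, Finset.mem_powerset] at hMF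
    obtain ⟨hMB, hMind⟩ := hMF
    -- every vertex of B \ M has a neighbour in M
    have hdom : ∀ v ∈ B, v ∉ M → ∃ u ∈ M, G.Adj v u := by
      intro v hvB hvM
      by_contra hcon
      push_neg at hcon
      have hins : insert v M ∈ F := by
        rw [hF, Finset.mem_filter, Finset.mem_powerset]
        refine ⟨Finset.insert_subset hvB hMB, ?_⟩
        intro x hx y hy hadj
        rcases Finset.mem_insert.mp hx with hx' | hx' <;>
          rcases Finset.mem_insert.mp hy with hy' | hy'
        · rw [hx', hy'] at hadj; exact G.irrefl hadj
        · rw [hx'] at hadj; exact hcon y hy' hadj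
        · rw [hy'] at hadj; exact hcon x hx' hadj.symm
        · exact hMind x hx' y hy' hadj
      exact hvM (hMmax hins (Finset.subset_insert v M) (Finset.mem_insert_self v M))
    -- the remainder has smaller degrees
    have hdeg' : ∀ v ∈ B \ M, ((B \ M).filter (G.Adj v)).card ≤ d := by
      intro v hv
      rw [Finset.mem_sdiff] at hv
      obtain ⟨u, huM, hadj⟩ := hdom v hv.1 hv.2
      have huf : u ∈ B.filter (G.Adj v) := Finset.mem_filter.mpr ⟨hMB huM, hadj⟩
      have hss : (B \ M).filter (G.Adj v) ⊆ (B.filter (G.Adj v)).erase u := by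
        intro w hw
        rw [Finset.mem_filter, Finset.mem_sdiff] at hw
        refine Finset.mem_erase.mpr ⟨?_, Finset.mem_filter.mpr ⟨hw.1.1, hw.2⟩⟩
        rintro rfl
        exact hw.1.2 huM
      have := Finset.card_le_card hss
      rw [Finset.card_erase_of_mem huf] at this
      have := hB v hv.1
      omega
    obtain ⟨L, hcov, hind, hlen, hsum⟩ := ih (B \ M) hdeg'
    refine ⟨M :: L, ?_, ?_, ?_, ?_⟩
    · intro v hv
      by_cases hvM : v ∈ M
      · exact ⟨M, by simp, hvM⟩
      · obtain ⟨I, hI, hvI⟩ := hcov v (Finset.mem_sdiff.mpr ⟨hv, hvM⟩)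
        exact ⟨I, by simp [hI], hvI⟩
    · intro I hI
      rcases List.mem_cons.mp hI with rfl | hI
      · exact ⟨hMB, hMind⟩
      · exact ⟨(hind I hI).1.trans Finset.sdiff_subset, (hind I hI).2⟩
    · simp only [List.length_cons]; omega
    · simp only [List.map_cons, List.sum_cons]
      have hcd : (B \ M).card = B.card - M.card := Finset.card_sdiff_of_subset hMB
      have := Finset.card_le_card hMB
      omega

/-- Phase 1: extract independent sets of size `s` from neighbourhoods of
high-degree vertices until all degrees are below `s`. -/
private lemma tfb_ph1 {V : Type*} [DecidableEq V] {G : SimpleGraph V} [DecidableRel G.Adj]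
    (h3 : G.CliqueFree 3) (s : ℕ) (hs : 1 ≤ s) :
    ∀ m (A : Finset V), A.card ≤ m →
    ∃ (B : Finset V) (L : List (Finset V)),
      (∀ v ∈ A, v ∈ B ∨ ∃ I ∈ L, v ∈ I) ∧
      (∀ I ∈ L, (∀ u ∈ I, ∀ w ∈ I, ¬ G.Adj u w) ∧ I.card ≤ 2 * s) ∧
      (∀ v ∈ B, (B.filter (G.Adj v)).card < s) ∧
      L.length * s + B.card ≤ A.card := by
  intro m
  induction m with
  | zero =>
    intro A hA
    rw [Nat.le_zero, Finset.card_eq_zero] at hA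
    subst hA
    exact ⟨∅, [], by simp, by simp, by simp, by simp⟩
  | succ m ih =>
    intro A hA
    by_cases hbig : ∃ v ∈ A, s ≤ (A.filter (G.Adj v)).card
    · obtain ⟨v, hvA, hdeg⟩ := hbig
      obtain ⟨N, hNsub, hNcard⟩ := Finset.exists_subset_card_eq hdeg
      have hNA : N ⊆ A := hNsub.trans (Finset.filter_subset _ _)
      have hNindep : ∀ u ∈ N, ∀ w ∈ N, ¬ G.Adj u w := by
        intro u hu w hw hadj
        exact h3 {v, u, w} (SimpleGraph.is3Clique_triple_iff.mpr
          ⟨(Finset.mem_filter.mp (hNsub hu)).2, (Finset.mem_filter.mp (hNsub hw)).2, hadj⟩)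
      have hsA : s ≤ A.card := hNcard ▸ Finset.card_le_card hNA
      have hcd : (A \ N).card = A.card - s := by rw [Finset.card_sdiff_of_subset hNA, hNcard]
      obtain ⟨B, L, hcov, hind, hdegB, hcount⟩ := ih (A \ N) (by omega)
      refine ⟨B, N :: L, ?_, ?_, hdegB, ?_⟩
      · intro w hw
        by_cases hwN : w ∈ N
        · exact Or.inr ⟨N, by simp, hwN⟩
        · rcases hcov w (Finset.mem_sdiff.mpr ⟨hw, hwN⟩) with hB | ⟨I, hI, hwI⟩
          · exact Or.inl hB
          · exact Or.inr ⟨I, by simp [hI], hwI⟩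
      · intro I hI
        rcases List.mem_cons.mp hI with rfl | hI
        · exact ⟨hNindep, by omega⟩
        · exact hind I hI
      · rw [List.length_cons, Nat.succ_mul]
        omega
    · push_neg at hbig
      exact ⟨A, [], fun v hv => Or.inl hv, by simp, hbig, by simp⟩

/-- The combinatorial core: a triangle-free graph on at most `s*s` vertices is covered
by at most `3*s` independent sets, each of size at most `2*s`. -/
private lemma tfb_main {V : Type*} [Fintype V] [DecidableEq V] (G : SimpleGraph V)
    [DecidableRel G.Adj] (h3 : G.CliqueFree 3) (s : ℕ) (hs : 1 ≤ s)
    (hn : Fintype.card V ≤ s * s) :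
    ∃ L : List (Finset V),
      (∀ v : V, ∃ I ∈ L, v ∈ I) ∧
      (∀ I ∈ L, (∀ u ∈ I, ∀ w ∈ I, ¬ G.Adj u w) ∧ I.card ≤ 2 * s) ∧
      L.length ≤ 3 * s := by
  obtain ⟨B, L₁, hcov1, hind1, hdegB, hcount⟩ :=
    tfb_ph1 h3 s hs (Fintype.card V) Finset.univ (by simp)
  rw [Finset.card_univ] at hcount
  obtain ⟨L₂, hcov2, hind2, hlen2, hsum2⟩ :=
    tfb_ph2 (G := G) (s - 1) B (fun v hv => by have := hdegB v hv; omega)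
  obtain ⟨L₃, hcov3, hsub3, hlen3⟩ := tfb_splitAll s hs L₂
  refine ⟨L₁ ++ L₃, ?_, ?_, ?_⟩
  · intro v
    rcases hcov1 v (Finset.mem_univ v) with hvB | ⟨I, hI, hvI⟩
    · obtain ⟨I, hI, hvI⟩ := hcov2 v hvB
      obtain ⟨J, hJ, hvJ⟩ := hcov3 I hI v hvI
      exact ⟨J, List.mem_append.mpr (Or.inr hJ), hvJ⟩
    · exact ⟨I, List.mem_append.mpr (Or.inl hI), hvI⟩
  · intro I hI
    rcases List.mem_append.mp hI with hI | hI
    · exact hind1 I hI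
    · obtain ⟨⟨J, hJ, hIJ⟩, hc⟩ := hsub3 I hI
      exact ⟨fun u hu w hw => (hind2 J hJ).2 u (hIJ hu) w (hIJ hw), hc⟩
  · have hs0 : 0 < s := hs
    have hL1 : L₁.length ≤ s := by
      have h1 : L₁.length * s ≤ s * s := by omega
      exact Nat.le_of_mul_le_mul_right h1 hs0
    have hBcard : B.card ≤ s * s := by omega
    have hdiv : (L₂.map Finset.card).sum / (2 * s) ≤ s / 2 := by
      have e : s * s / (2 * s) = s / 2 := by
        rw [mul_comm 2 s, Nat.mul_div_mul_left _ _ hs0]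
      calc (L₂.map Finset.card).sum / (2 * s) ≤ s * s / (2 * s) :=
            Nat.div_le_div_right (hsum2.trans hBcard)
        _ = s / 2 := e
    have hhalf : s / 2 ≤ s := Nat.div_le_self _ _
    rw [List.length_append]
    omega

set_option maxHeartbeats 1000000 in
/-- Every triangle-free finite graph on `n` vertices admits a proper coloring with at
most `3⌈√n⌉` colors in which every color class has at most `2⌈√n⌉` vertices. -/
theorem triangleFree_balanced_coloring {V : Type*} [Fintype V] (G : SimpleGraph V)
    (h : G.CliqueFree 3) :
    ∃ c : G.Coloring (Fin (3 * ⌈Real.sqrt (Fintype.card V)⌉₊)),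
      ∀ i, (Finset.univ.filter fun v => c v = i).card
        ≤ 2 * ⌈Real.sqrt (Fintype.card V)⌉₊ := by
  classical
  set s := ⌈Real.sqrt (Fintype.card V)⌉₊ with hsdef
  by_cases h0 : Fintype.card V = 0
  · have hVempty : IsEmpty V := Fintype.card_eq_zero_iff.mp h0
    refine ⟨SimpleGraph.Coloring.mk (fun v => isEmptyElim v)
      (fun {a b} hab => isEmptyElim a), fun i => ?_⟩
    simp [Finset.univ_eq_empty]
  · have hpos : 0 < Fintype.card V := Nat.pos_of_ne_zero h0
    have hs : 1 ≤ s := by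
      rw [hsdef]
      exact Nat.one_le_iff_ne_zero.mpr (by
        have : (0:ℝ) < Real.sqrt (Fintype.card V) :=
          Real.sqrt_pos.mpr (by exact_mod_cast hpos)
        exact Nat.ceil_pos.mpr this |>.ne')
    have hn : Fintype.card V ≤ s * s := by
      have h1 : (Fintype.card V : ℝ) ≤ (s : ℝ) * s := by
        have hle := Nat.le_ceil (Real.sqrt (Fintype.card V))
        have hnn : (0:ℝ) ≤ Real.sqrt (Fintype.card V) := Real.sqrt_nonneg _
        calc (Fintype.card V : ℝ)
            = Real.sqrt (Fintype.card V) * Real.sqrt (Fintype.card V) :=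
              (Real.mul_self_sqrt (by positivity)).symm
          _ ≤ (s : ℝ) * s := mul_le_mul hle hle hnn (hnn.trans hle)
      exact_mod_cast h1
    obtain ⟨L, hcov, hind, hlen⟩ := tfb_main G h s hs hn
    set cf : V → ℕ := fun v => L.findIdx (fun I => decide (v ∈ I)) with hcf
    have hlt : ∀ v, cf v < L.length := by
      intro v
      obtain ⟨I, hI, hvI⟩ := hcov v
      exact List.findIdx_lt_length_of_exists ⟨I, hI, decide_eq_true hvI⟩
    have hmem : ∀ v, v ∈ L.get ⟨cf v, hlt v⟩ :=
      fun v => of_decide_eq_true (List.findIdx_getElem (w := hlt v))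
    refine ⟨SimpleGraph.Coloring.mk
      (fun v => ⟨cf v, lt_of_lt_of_le (hlt v) hlen⟩) ?_, ?_⟩
    · intro a b hab heq
      have hv : cf a = cf b := congrArg Fin.val heq
      have hfin : (⟨cf a, hlt a⟩ : Fin L.length) = ⟨cf b, hlt b⟩ := Fin.ext hv
      have hma := hmem a
      have hmb := hmem b
      rw [← hfin] at hmb
      exact (hind _ (List.get_mem L _)).1 a hma b hmb hab
    · intro i
      by_cases hi : (i : ℕ) < L.length
      · have hsub : (Finset.univ.filter
            fun v => (⟨cf v, lt_of_lt_of_le (hlt v) hlen⟩ : Fin (3 * s)) = i)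
            ⊆ L.get ⟨(i : ℕ), hi⟩ := by
          intro v hv
          have hveq := (Finset.mem_filter.mp hv).2
          have hvi : cf v = (i : ℕ) := congrArg Fin.val hveq
          have hfin : (⟨cf v, hlt v⟩ : Fin L.length) = ⟨(i : ℕ), hi⟩ := Fin.ext hvi
          exact hfin ▸ hmem v
        exact le_trans (Finset.card_le_card hsub)
          ((hind _ (List.get_mem L _)).2)

      · have hempty : (Finset.univ.filter
            fun v => (⟨cf v, lt_of_lt_of_le (hlt v) hlen⟩ : Fin (3 * s)) = i) = ∅ := by
          refine Finset.filter_eq_empty_iff.mpr ?_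
          intro v _ hveq
          exact hi (congrArg Fin.val hveq ▸ hlt v)
        exact le_trans (Finset.card_le_card (le_of_eq hempty)) (by simp)
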